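/- Let Λ be a σ-finite measure on 𝒫 satisfying conditions (1.4) and (1.5). Then ∫_𝒫 Σ_{n≥1} e^{θ x_n} (1 ∧ x_n²) Λ(dx) < ∞, where terms of the sum with x_n = −∞ are set to 0. -/
import Mathlib


open MeasureTheory ENNReal Filter

noncomputable section

/-- The space `𝒫` of nonincreasing sequences in `[-∞, ∞)` tending to `-∞`,
equipped (as a subtype of `ℕ → EReal`) with the σ-algebra generated by the coordinate maps. -/
def calP : Set (ℕ → EReal) :=
  {x | Antitone x ∧ (∀ n, x n ≠ ⊤) ∧ Tendsto x atTop (nhds ⊥)}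

/-- `e^{θ y}`, with the convention that it is `0` when `y = -∞`, even for `θ = 0`. -/
def eexp (θ : ℝ) (y : EReal) : ℝ≥0∞ :=
  if y = ⊥ then 0 else ENNReal.ofReal (Real.exp (θ * y.toReal))

/-- `⟨x, e_θ⟩ = Σ_{n ≥ 1} e^{θ x_n}` (the sequence is indexed from `0` in Lean). -/
def ip (θ : ℝ) (x : ℕ → EReal) : ℝ≥0∞ := ∑' n, eexp θ (x n)

/-- Condition (1.4): `∫ (1 ∧ x₁²) Λ(dx) < ∞`, with `1 ∧ x₁² = 1` when `x₁ = -∞`. -/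
def cond14 (Λ : Measure calP) : Prop :=
  ∫⁻ x : calP, (if x.1 0 = ⊥ then 1
    else 1 ⊓ ENNReal.ofReal ((x.1 0).toReal ^ 2)) ∂Λ < ∞

/-- Condition (1.5): `∫ (1_{x₁>1} e^{θ x₁} + Σ_{k≥2} e^{θ x_k}) Λ(dx) < ∞`. -/
def cond15 (θ : ℝ) (Λ : Measure calP) : Prop :=
  ∫⁻ x : calP, ((if (1 : EReal) < x.1 0 then eexp θ (x.1 0) else 0)
    + ∑' k, eexp θ (x.1 (k + 1))) ∂Λ < ∞

lemma eexp_measurable (θ : ℝ) : Measurable (eexp θ) := by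
  unfold eexp
  refine Measurable.ite (measurableSet_singleton ⊥) measurable_const ?_
  exact (ENNReal.measurable_ofReal.comp (Real.measurable_exp.comp
    (measurable_const.mul measurable_ereal_toReal)))

lemma coord_measurable (n : ℕ) : Measurable (fun x : calP => x.1 n) :=
  (measurable_pi_apply n).comp measurable_subtype_coe

lemma g15_measurable (θ : ℝ) : Measurable (fun x : calP =>
    (if (1 : EReal) < x.1 0 then eexp θ (x.1 0) else 0)
      + ∑' k, eexp θ (x.1 (k + 1))) := by
  refine Measurable.add ?_ ?_
  · refine Measurable.ite ?_ ((eexp_measurable θ).comp (coord_measurable 0)) measurable_const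
    exact measurableSet_lt measurable_const (coord_measurable 0)
  · exact Measurable.ennreal_tsum fun k => (eexp_measurable θ).comp (coord_measurable (k + 1))

/-- `∫ Σ_{n≥1} e^{θ x_n} (1 ∧ x_n²) Λ(dx) < ∞` (terms with `x_n = -∞` vanish,
since `eexp θ ⊥ = 0`). -/
theorem stmt7 (θ : ℝ) (hθ : 0 ≤ θ) (Λ : Measure calP) [SigmaFinite Λ]
    (h14 : cond14 Λ) (h15 : cond15 θ Λ) :
    ∫⁻ x : calP, ∑' n, eexp θ (x.1 n) * (1 ⊓ ENNReal.ofReal ((x.1 n).toReal ^ 2)) ∂Λ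
      < ∞ := by
  set C : ℝ≥0∞ := ENNReal.ofReal (Real.exp θ) with hCdef
  have hC : C ≠ ⊤ := ENNReal.ofReal_ne_top
  set g : calP → ℝ≥0∞ := fun x =>
    (if (1 : EReal) < x.1 0 then eexp θ (x.1 0) else 0) + ∑' k, eexp θ (x.1 (k + 1)) with hg
  set h : calP → ℝ≥0∞ := fun x =>
    (if x.1 0 = ⊥ then 1 else 1 ⊓ ENNReal.ofReal ((x.1 0).toReal ^ 2)) with hh
  have key : ∀ x : calP,
      (∑' n, eexp θ (x.1 n) * (1 ⊓ ENNReal.ofReal ((x.1 n).toReal ^ 2)))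
        ≤ g x + C * h x := by
    intro x
    have hsplit := tsum_eq_zero_add'
      (f := fun n => eexp θ (x.1 n) * (1 ⊓ ENNReal.ofReal ((x.1 n).toReal ^ 2)))
      ENNReal.summable
    rw [hsplit]
    have h0 : eexp θ (x.1 0) * (1 ⊓ ENNReal.ofReal ((x.1 0).toReal ^ 2))
        ≤ (if (1 : EReal) < x.1 0 then eexp θ (x.1 0) else 0) + C * h x := by
      by_cases hb : x.1 0 = ⊥
      · simp [eexp, hb]
      · by_cases hl : (1 : EReal) < x.1 0
        · calc eexp θ (x.1 0) * (1 ⊓ ENNReal.ofReal ((x.1 0).toReal ^ 2))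
              ≤ eexp θ (x.1 0) * 1 := by gcongr; exact inf_le_left
            _ = eexp θ (x.1 0) := mul_one _
            _ ≤ _ := by simp [hl]
        · have ht : x.1 0 ≠ ⊤ := x.2.2.1 0
          have hle : (x.1 0).toReal ≤ 1 := by
            have := EReal.toReal_le_toReal (le_of_not_gt hl) hb (EReal.coe_one ▸ EReal.coe_ne_top 1)
            simpa using this
          have heexp : eexp θ (x.1 0) ≤ C := by
            rw [eexp, if_neg hb, hCdef]
            exact ENNReal.ofReal_le_ofReal (Real.exp_le_exp.mpr
              (by nlinarith [mul_le_mul_of_nonneg_left hle hθ]))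
          calc eexp θ (x.1 0) * (1 ⊓ ENNReal.ofReal ((x.1 0).toReal ^ 2))
              ≤ C * (1 ⊓ ENNReal.ofReal ((x.1 0).toReal ^ 2)) := by gcongr
            _ = C * h x := by rw [hh]; simp [hb]
            _ ≤ _ := le_add_self
    have htail : (∑' k, eexp θ (x.1 (k + 1)) * (1 ⊓ ENNReal.ofReal ((x.1 (k + 1)).toReal ^ 2)))
        ≤ ∑' k, eexp θ (x.1 (k + 1)) := by
      refine ENNReal.tsum_le_tsum fun k => ?_
      calc eexp θ (x.1 (k + 1)) * (1 ⊓ ENNReal.ofReal ((x.1 (k + 1)).toReal ^ 2))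
          ≤ eexp θ (x.1 (k + 1)) * 1 := by gcongr; exact inf_le_left
        _ = _ := mul_one _
    calc eexp θ (x.1 0) * (1 ⊓ ENNReal.ofReal ((x.1 0).toReal ^ 2))
          + ∑' k, eexp θ (x.1 (k + 1)) * (1 ⊓ ENNReal.ofReal ((x.1 (k + 1)).toReal ^ 2))
        ≤ ((if (1 : EReal) < x.1 0 then eexp θ (x.1 0) else 0) + C * h x)
          + ∑' k, eexp θ (x.1 (k + 1)) := add_le_add h0 htail
      _ = g x + C * h x := by rw [hg]; ring
  calc ∫⁻ x : calP, ∑' n, eexp θ (x.1 n) * (1 ⊓ ENNReal.ofReal ((x.1 n).toReal ^ 2)) ∂Λ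
      ≤ ∫⁻ x, g x + C * h x ∂Λ := lintegral_mono key
    _ = (∫⁻ x, g x ∂Λ) + ∫⁻ x, C * h x ∂Λ := lintegral_add_left (g15_measurable θ) _
    _ = (∫⁻ x, g x ∂Λ) + C * ∫⁻ x, h x ∂Λ := by rw [lintegral_const_mul' C h hC]
    _ < ⊤ := ENNReal.add_lt_top.mpr ⟨h15, ENNReal.mul_lt_top hC.lt_top h14⟩
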